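/- Every one-step rewrite of the simplification system preserves the trace semantics: for all interactions i, i' ∈ I, if i →_R i' then σ(i) = σ(i'). -/

import Mathlib

/-- An atomic communication action: the emission (`isEmission = true`) or
reception (`isEmission = false`) of a message on a lifeline. -/
structure MyAction (L M : Type) where
  lifeline : L
  isEmission : Bool
  message : M

/-- Interaction terms: constants are actions and the empty interaction,
`loopS` is unary, and `strict`, `alt` and `cr ℓ` (for every `ℓ ⊆ L`) are binary.
`seq = cr ∅` and `par = cr Set.univ`. -/
inductive Interaction (L M : Type) : Type where
  | empty : Interaction L M
  | act : MyAction L M → Interaction L M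
  | loopS : Interaction L M → Interaction L M
  | strict : Interaction L M → Interaction L M → Interaction L M
  | alt : Interaction L M → Interaction L M → Interaction L M
  | cr : Set L → Interaction L M → Interaction L M → Interaction L M

namespace Interaction

variable {L M : Type}

/-- The evasion predicate `i ↓ ℓ`. -/
inductive Evades : Interaction L M → Set L → Prop where
  | empty (ℓ : Set L) : Evades .empty ℓ
  | act (a : MyAction L M) (ℓ : Set L) : a.lifeline ∉ ℓ → Evades (.act a) ℓ
  | altL {i1 i2 : Interaction L M} {ℓ} : Evades i1 ℓ → Evades (.alt i1 i2) ℓ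
  | altR {i1 i2 : Interaction L M} {ℓ} : Evades i2 ℓ → Evades (.alt i1 i2) ℓ
  | strict {i1 i2 : Interaction L M} {ℓ} : Evades i1 ℓ → Evades i2 ℓ →
      Evades (.strict i1 i2) ℓ
  | cr {i1 i2 : Interaction L M} {ℓ' ℓ} : Evades i1 ℓ → Evades i2 ℓ →
      Evades (.cr ℓ' i1 i2) ℓ
  | loopS (i1 : Interaction L M) (ℓ : Set L) : Evades (.loopS i1) ℓ

/-- The pruning relation `i ⤳ℓ i'`. -/
inductive Prune : Interaction L M → Set L → Interaction L M → Prop where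
  | empty (ℓ : Set L) : Prune .empty ℓ .empty
  | act (a : MyAction L M) (ℓ : Set L) : a.lifeline ∉ ℓ → Prune (.act a) ℓ (.act a)
  | altL {i1 i2 i1' : Interaction L M} {ℓ} : Prune i1 ℓ i1' → ¬ Evades i2 ℓ →
      Prune (.alt i1 i2) ℓ i1'
  | altR {i1 i2 i2' : Interaction L M} {ℓ} : Prune i2 ℓ i2' → ¬ Evades i1 ℓ →
      Prune (.alt i1 i2) ℓ i2'
  | altBoth {i1 i2 i1' i2' : Interaction L M} {ℓ} : Prune i1 ℓ i1' → Prune i2 ℓ i2' →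
      Prune (.alt i1 i2) ℓ (.alt i1' i2')
  | strict {i1 i2 i1' i2' : Interaction L M} {ℓ} : Prune i1 ℓ i1' → Prune i2 ℓ i2' →
      Prune (.strict i1 i2) ℓ (.strict i1' i2')
  | cr {i1 i2 i1' i2' : Interaction L M} {ℓ' ℓ} : Prune i1 ℓ i1' → Prune i2 ℓ i2' →
      Prune (.cr ℓ' i1 i2) ℓ (.cr ℓ' i1' i2')
  | loopS {i1 i1' : Interaction L M} {ℓ} : Prune i1 ℓ i1' →
      Prune (.loopS i1) ℓ (.loopS i1')
  | loopSElim {i1 : Interaction L M} {ℓ} : ¬ Evades i1 ℓ → Prune (.loopS i1) ℓ .empty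

/-- The non-expression predicate `i ̸→a`. -/
inductive NoExpr : Interaction L M → MyAction L M → Prop where
  | empty (a : MyAction L M) : NoExpr .empty a
  | act {a' a : MyAction L M} : a' ≠ a → NoExpr (.act a') a
  | loopS {i1 : Interaction L M} {a} : NoExpr i1 a → NoExpr (.loopS i1) a
  | strictNoEvade {i1 i2 : Interaction L M} {a} : NoExpr i1 a →
      ¬ Evades i1 Set.univ → NoExpr (.strict i1 i2) a
  | strictBoth {i1 i2 : Interaction L M} {a} : NoExpr i1 a →
      NoExpr i2 a → NoExpr (.strict i1 i2) a
  | crNoEvade {i1 i2 : Interaction L M} {ℓ a} : NoExpr i1 a →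
      ¬ Evades i1 ({a.lifeline} \ ℓ) → NoExpr (.cr ℓ i1 i2) a
  | crBoth {i1 i2 : Interaction L M} {ℓ a} : NoExpr i1 a →
      NoExpr i2 a → NoExpr (.cr ℓ i1 i2) a
  | alt {i1 i2 : Interaction L M} {a} : NoExpr i1 a → NoExpr i2 a →
      NoExpr (.alt i1 i2) a

/-- The execution relation `i →a i'`. -/
inductive Exec : Interaction L M → MyAction L M → Interaction L M → Prop where
  | act (a : MyAction L M) : Exec (.act a) a .empty
  | loop {i1 i1' : Interaction L M} {a} : Exec i1 a i1' →
      Exec (.loopS i1) a (.strict i1' (.loopS i1))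
  | strictL {i1 i2 i1' : Interaction L M} {a} : Exec i1 a i1' →
      Exec (.strict i1 i2) a (.strict i1' i2)
  | crL {i1 i2 i1' : Interaction L M} {ℓ a} : Exec i1 a i1' →
      Exec (.cr ℓ i1 i2) a (.cr ℓ i1' i2)
  | strictR {i1 i2 i2' : Interaction L M} {a} : Exec i2 a i2' → Evades i1 Set.univ →
      Exec (.strict i1 i2) a i2'
  | crR {i1 i2 i1' i2' : Interaction L M} {ℓ a} : Exec i2 a i2' →
      Prune i1 ({a.lifeline} \ ℓ) i1' → Exec (.cr ℓ i1 i2) a (.cr ℓ i1' i2')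
  | altChoiceL {i1 i2 i1' : Interaction L M} {a} : Exec i1 a i1' → NoExpr i2 a →
      Exec (.alt i1 i2) a i1'
  | altChoiceR {i1 i2 i2' : Interaction L M} {a} : Exec i2 a i2' → NoExpr i1 a →
      Exec (.alt i1 i2) a i2'
  | altDelay {i1 i2 i1' i2' : Interaction L M} {a} : Exec i1 a i1' → Exec i2 a i2' →
      Exec (.alt i1 i2) a (.alt i1' i2')

/-- The trace semantics `σ(i)`, as a predicate: `Sem i t` iff `t ∈ σ(i)`. -/
inductive Sem : Interaction L M → List (MyAction L M) → Prop where
  | nil {i : Interaction L M} : Evades i Set.univ → Sem i []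
  | cons {i i' : Interaction L M} {a t} : Exec i a i' → Sem i' t → Sem i (a :: t)

/-- One execution step: `i → i'` iff `i →a i'` for some action `a`. -/
def Step (i i' : Interaction L M) : Prop := ∃ a, Exec i a i'

/-- `reach i = { i' | i →* i' }`. -/
def Reach (i : Interaction L M) : Set (Interaction L M) :=
  {i' | Relation.ReflTransGen Step i i'}

/-- One-step rewriting by the simplification system `R`, closed under contexts. -/
inductive Rw : Interaction L M → Interaction L M → Prop where
  | strictEmptyL (x : Interaction L M) : Rw (.strict .empty x) x
  | strictEmptyR (x : Interaction L M) : Rw (.strict x .empty) x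
  | crEmptyL (ℓ : Set L) (x : Interaction L M) : Rw (.cr ℓ .empty x) x
  | crEmptyR (ℓ : Set L) (x : Interaction L M) : Rw (.cr ℓ x .empty) x
  | altEmptyLoop (x : Interaction L M) : Rw (.alt .empty (.loopS x)) (.loopS x)
  | altLoopEmpty (x : Interaction L M) : Rw (.alt (.loopS x) .empty) (.loopS x)
  | altEmptyEmpty : Rw (Interaction.alt (L := L) (M := M) .empty .empty) .empty
  | loopEmpty : Rw (Interaction.loopS (L := L) (M := M) .empty) .empty
  | loopCongr {i i' : Interaction L M} : Rw i i' → Rw (.loopS i) (.loopS i')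
  | strictCongrL {i1 i1' i2 : Interaction L M} : Rw i1 i1' →
      Rw (.strict i1 i2) (.strict i1' i2)
  | strictCongrR {i1 i2 i2' : Interaction L M} : Rw i2 i2' →
      Rw (.strict i1 i2) (.strict i1 i2')
  | altCongrL {i1 i1' i2 : Interaction L M} : Rw i1 i1' → Rw (.alt i1 i2) (.alt i1' i2)
  | altCongrR {i1 i2 i2' : Interaction L M} : Rw i2 i2' → Rw (.alt i1 i2) (.alt i1 i2')
  | crCongrL {i1 i1' i2 : Interaction L M} {ℓ} : Rw i1 i1' →
      Rw (.cr ℓ i1 i2) (.cr ℓ i1' i2)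
  | crCongrR {i1 i2 i2' : Interaction L M} {ℓ} : Rw i2 i2' →
      Rw (.cr ℓ i1 i2) (.cr ℓ i1 i2')

end Interaction

open Interaction

section Aux

variable {L M : Type}

/-- Reflexive-transitive closure of the rewrite relation. -/
abbrev RT (i i' : Interaction L M) : Prop := Relation.ReflTransGen Rw i i'

lemma empty_no_exec {a : MyAction L M} {j : Interaction L M} :
    ¬ Exec .empty a j := fun h => by cases h

lemma rt_strictL {i1 i1' i2 : Interaction L M} (h : RT i1 i1') :
    RT (.strict i1 i2) (.strict i1' i2) :=
  Relation.ReflTransGen.lift (fun x => Interaction.strict x i2)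
    (fun _ _ => Rw.strictCongrL) _ _ h

lemma rt_strictR {i1 i2 i2' : Interaction L M} (h : RT i2 i2') :
    RT (.strict i1 i2) (.strict i1 i2') :=
  Relation.ReflTransGen.lift (fun x => Interaction.strict i1 x)
    (fun _ _ => Rw.strictCongrR) _ _ h

lemma rt_altL {i1 i1' i2 : Interaction L M} (h : RT i1 i1') :
    RT (.alt i1 i2) (.alt i1' i2) :=
  Relation.ReflTransGen.lift (fun x => Interaction.alt x i2)
    (fun _ _ => Rw.altCongrL) _ _ h

lemma rt_altR {i1 i2 i2' : Interaction L M} (h : RT i2 i2') :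
    RT (.alt i1 i2) (.alt i1 i2') :=
  Relation.ReflTransGen.lift (fun x => Interaction.alt i1 x)
    (fun _ _ => Rw.altCongrR) _ _ h

lemma rt_crL {i1 i1' i2 : Interaction L M} {ℓ : Set L} (h : RT i1 i1') :
    RT (.cr ℓ i1 i2) (.cr ℓ i1' i2) :=
  Relation.ReflTransGen.lift (fun x => Interaction.cr ℓ x i2)
    (fun _ _ => Rw.crCongrL) _ _ h

lemma rt_crR {i1 i2 i2' : Interaction L M} {ℓ : Set L} (h : RT i2 i2') :
    RT (.cr ℓ i1 i2) (.cr ℓ i1 i2') :=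
  Relation.ReflTransGen.lift (fun x => Interaction.cr ℓ i1 x)
    (fun _ _ => Rw.crCongrR) _ _ h

lemma rt_loop {i1 i1' : Interaction L M} (h : RT i1 i1') :
    RT (.loopS i1) (.loopS i1') :=
  Relation.ReflTransGen.lift Interaction.loopS (fun _ _ => Rw.loopCongr) _ _ h

/-- A one-step rewrite preserves evasion. -/
lemma rw_evades {i i' : Interaction L M} (h : Rw i i') (ℓ : Set L) :
    Evades i ℓ ↔ Evades i' ℓ := by
  induction h with
  | strictEmptyL x =>
      exact ⟨fun h => by cases h with | strict h1 h2 => exact h2,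
        fun h => .strict (.empty ℓ) h⟩
  | strictEmptyR x =>
      exact ⟨fun h => by cases h with | strict h1 h2 => exact h1,
        fun h => .strict h (.empty ℓ)⟩
  | crEmptyL ℓ' x =>
      exact ⟨fun h => by cases h with | cr h1 h2 => exact h2,
        fun h => .cr (.empty ℓ) h⟩
  | crEmptyR ℓ' x =>
      exact ⟨fun h => by cases h with | cr h1 h2 => exact h1,
        fun h => .cr h (.empty ℓ)⟩
  | altEmptyLoop x => exact ⟨fun _ => .loopS x ℓ, fun _ => .altL (.empty ℓ)⟩
  | altLoopEmpty x => exact ⟨fun _ => .loopS x ℓ, fun _ => .altR (.empty ℓ)⟩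
  | altEmptyEmpty => exact ⟨fun _ => .empty ℓ, fun _ => .altL (.empty ℓ)⟩
  | loopEmpty => exact ⟨fun _ => .empty ℓ, fun _ => .loopS _ ℓ⟩
  | loopCongr hr ih => exact ⟨fun _ => .loopS _ ℓ, fun _ => .loopS _ ℓ⟩
  | strictCongrL hr ih =>
      constructor
      · intro h; cases h with | strict h1 h2 => exact .strict (ih.mp h1) h2
      · intro h; cases h with | strict h1 h2 => exact .strict (ih.mpr h1) h2
  | strictCongrR hr ih =>
      constructor
      · intro h; cases h with | strict h1 h2 => exact .strict h1 (ih.mp h2)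
      · intro h; cases h with | strict h1 h2 => exact .strict h1 (ih.mpr h2)
  | altCongrL hr ih =>
      constructor
      · intro h
        cases h with
        | altL h1 => exact .altL (ih.mp h1)
        | altR h2 => exact .altR h2
      · intro h
        cases h with
        | altL h1 => exact .altL (ih.mpr h1)
        | altR h2 => exact .altR h2
  | altCongrR hr ih =>
      constructor
      · intro h
        cases h with
        | altL h1 => exact .altL h1
        | altR h2 => exact .altR (ih.mp h2)
      · intro h
        cases h with
        | altL h1 => exact .altL h1
        | altR h2 => exact .altR (ih.mpr h2)
  | crCongrL hr ih =>
      constructor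
      · intro h; cases h with | cr h1 h2 => exact .cr (ih.mp h1) h2
      · intro h; cases h with | cr h1 h2 => exact .cr (ih.mpr h1) h2
  | crCongrR hr ih =>
      constructor
      · intro h; cases h with | cr h1 h2 => exact .cr h1 (ih.mp h2)
      · intro h; cases h with | cr h1 h2 => exact .cr h1 (ih.mpr h2)

lemma rt_evades {i i' : Interaction L M} (h : RT i i') (ℓ : Set L) :
    Evades i ℓ ↔ Evades i' ℓ := by
  induction h with
  | refl => exact Iff.rfl
  | tail _ hr ih => exact ih.trans (rw_evades hr ℓ)

lemma evades_of_prune {i i' : Interaction L M} {ℓ : Set L}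
    (h : Prune i ℓ i') : Evades i ℓ := by
  induction h with
  | empty ℓ => exact .empty ℓ
  | act a ℓ hn => exact .act a ℓ hn
  | altL _ _ ih => exact .altL ih
  | altR _ _ ih => exact .altR ih
  | altBoth _ _ ih1 ih2 => exact .altL ih1
  | strict _ _ ih1 ih2 => exact .strict ih1 ih2
  | cr _ _ ih1 ih2 => exact .cr ih1 ih2
  | loopS _ _ => exact .loopS _ _
  | loopSElim _ => exact .loopS _ _

lemma prune_exists (i : Interaction L M) :
    ∀ ℓ : Set L, Evades i ℓ → ∃ i', Prune i ℓ i' := by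
  induction i with
  | empty => exact fun ℓ _ => ⟨_, .empty ℓ⟩
  | act a =>
      intro ℓ h
      cases h with | act _ _ hn => exact ⟨_, .act a ℓ hn⟩
  | loopS i1 ih =>
      intro ℓ _
      by_cases he : Evades i1 ℓ
      · obtain ⟨i1', hp⟩ := ih ℓ he
        exact ⟨_, .loopS hp⟩
      · exact ⟨_, .loopSElim he⟩
  | strict i1 i2 ih1 ih2 =>
      intro ℓ h
      cases h with
      | strict h1 h2 =>
          obtain ⟨_, p1⟩ := ih1 ℓ h1
          obtain ⟨_, p2⟩ := ih2 ℓ h2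
          exact ⟨_, .strict p1 p2⟩
  | alt i1 i2 ih1 ih2 =>
      intro ℓ h
      by_cases h1 : Evades i1 ℓ <;> by_cases h2 : Evades i2 ℓ
      · obtain ⟨_, p1⟩ := ih1 ℓ h1
        obtain ⟨_, p2⟩ := ih2 ℓ h2
        exact ⟨_, .altBoth p1 p2⟩
      · obtain ⟨_, p1⟩ := ih1 ℓ h1
        exact ⟨_, .altL p1 h2⟩
      · obtain ⟨_, p2⟩ := ih2 ℓ h2
        exact ⟨_, .altR p2 h1⟩
      · exfalso; cases h with
        | altL h' => exact h1 h'
        | altR h' => exact h2 h'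
  | cr ℓ' i1 i2 ih1 ih2 =>
      intro ℓ h
      cases h with
      | cr h1 h2 =>
          obtain ⟨_, p1⟩ := ih1 ℓ h1
          obtain ⟨_, p2⟩ := ih2 ℓ h2
          exact ⟨_, .cr p1 p2⟩

lemma not_exec_of_noExpr {i : Interaction L M} {a : MyAction L M}
    (h : NoExpr i a) : ∀ j, ¬ Exec i a j := by
  induction h with
  | empty a => exact fun j => empty_no_exec
  | act hne =>
      intro j hj
      cases hj; exact hne rfl
  | loopS _ ih =>
      intro j hj
      cases hj with | loop h1 => exact ih _ h1
  | strictNoEvade _ hne ih =>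
      intro j hj
      cases hj with
      | strictL h1 => exact ih _ h1
      | strictR h2 hev => exact hne hev
  | strictBoth _ _ ih1 ih2 =>
      intro j hj
      cases hj with
      | strictL h1 => exact ih1 _ h1
      | strictR h2 _ => exact ih2 _ h2
  | crNoEvade _ hne ih =>
      intro j hj
      cases hj with
      | crL h1 => exact ih _ h1
      | crR h2 hp => exact hne (evades_of_prune hp)
  | crBoth _ _ ih1 ih2 =>
      intro j hj
      cases hj with
      | crL h1 => exact ih1 _ h1
      | crR h2 _ => exact ih2 _ h2
  | alt _ _ ih1 ih2 =>
      intro j hj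
      cases hj with
      | altChoiceL h1 _ => exact ih1 _ h1
      | altChoiceR h2 _ => exact ih2 _ h2
      | altDelay h1 _ => exact ih1 _ h1

lemma noExpr_of_not_exec {a : MyAction L M} (i : Interaction L M)
    (h : ∀ j, ¬ Exec i a j) : NoExpr i a := by
  induction i with
  | empty => exact .empty a
  | act a' =>
      refine .act (fun he => ?_)
      subst he
      exact h _ (.act a')
  | loopS i1 ih =>
      exact .loopS (ih (fun j hj => h _ (.loop hj)))
  | strict i1 i2 ih1 ih2 =>
      have h1 : NoExpr i1 a := ih1 (fun j hj => h _ (.strictL hj))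
      by_cases he : Evades i1 Set.univ
      · exact .strictBoth h1 (ih2 (fun j hj => h _ (.strictR hj he)))
      · exact .strictNoEvade h1 he
  | alt i1 i2 ih1 ih2 =>
      by_cases e1 : ∃ j, Exec i1 a j
      · obtain ⟨j1, hj1⟩ := e1
        by_cases e2 : ∃ j, Exec i2 a j
        · obtain ⟨j2, hj2⟩ := e2
          exact absurd (Exec.altDelay hj1 hj2) (h _)
        · push_neg at e2
          exact absurd (Exec.altChoiceL hj1 (ih2 e2)) (h _)
      · push_neg at e1
        have h1 : NoExpr i1 a := ih1 e1
        by_cases e2 : ∃ j, Exec i2 a j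
        · obtain ⟨j2, hj2⟩ := e2
          exact absurd (Exec.altChoiceR hj2 h1) (h _)
        · push_neg at e2
          exact .alt h1 (ih2 e2)
  | cr ℓ i1 i2 ih1 ih2 =>
      have h1 : NoExpr i1 a := ih1 (fun j hj => h _ (.crL hj))
      by_cases he : Evades i1 ({a.lifeline} \ ℓ)
      · obtain ⟨i1', hp⟩ := prune_exists i1 _ he
        exact .crBoth h1 (ih2 (fun j hj => h _ (.crR hj hp)))
      · exact .crNoEvade h1 he

/-- One-step rewrites are a bisimulation (up to `RT`) for pruning. -/
lemma prune_sim {i i' : Interaction L M} (h : Rw i i') :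
    (∀ ℓ p, Prune i ℓ p → ∃ p', Prune i' ℓ p' ∧ RT p p') ∧
    (∀ ℓ p', Prune i' ℓ p' → ∃ p, Prune i ℓ p ∧ RT p p') := by
  induction h with
  | strictEmptyL x =>
      constructor
      · intro ℓ p hp
        cases hp with
        | strict p1 p2 => cases p1; exact ⟨_, p2, .single (.strictEmptyL _)⟩
      · intro ℓ p' hp'
        exact ⟨_, .strict (.empty ℓ) hp', .single (.strictEmptyL _)⟩
  | strictEmptyR x =>
      constructor
      · intro ℓ p hp
        cases hp with
        | strict p1 p2 => cases p2; exact ⟨_, p1, .single (.strictEmptyR _)⟩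
      · intro ℓ p' hp'
        exact ⟨_, .strict hp' (.empty ℓ), .single (.strictEmptyR _)⟩
  | crEmptyL ℓ' x =>
      constructor
      · intro ℓ p hp
        cases hp with
        | cr p1 p2 => cases p1; exact ⟨_, p2, .single (.crEmptyL _ _)⟩
      · intro ℓ p' hp'
        exact ⟨_, .cr (.empty ℓ) hp', .single (.crEmptyL _ _)⟩
  | crEmptyR ℓ' x =>
      constructor
      · intro ℓ p hp
        cases hp with
        | cr p1 p2 => cases p2; exact ⟨_, p1, .single (.crEmptyR _ _)⟩
      · intro ℓ p' hp'
        exact ⟨_, .cr hp' (.empty ℓ), .single (.crEmptyR _ _)⟩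
  | altEmptyLoop x =>
      constructor
      · intro ℓ p hp
        cases hp with
        | altL p1 hne => exact absurd (.loopS x ℓ) hne
        | altR p2 hne => exact absurd (.empty ℓ) hne
        | altBoth p1 p2 =>
            cases p1
            cases p2 with
            | loopS hq => exact ⟨_, .loopS hq, .single (.altEmptyLoop _)⟩
            | loopSElim hq => exact ⟨_, .loopSElim hq, .single .altEmptyEmpty⟩
      · intro ℓ p' hp'
        refine ⟨_, .altBoth (.empty ℓ) hp', ?_⟩
        cases hp' with
        | loopS hq => exact .single (.altEmptyLoop _)
        | loopSElim hq => exact .single .altEmptyEmpty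
  | altLoopEmpty x =>
      constructor
      · intro ℓ p hp
        cases hp with
        | altL p1 hne => exact absurd (.empty ℓ) hne
        | altR p2 hne => exact absurd (.loopS x ℓ) hne
        | altBoth p1 p2 =>
            cases p2
            cases p1 with
            | loopS hq => exact ⟨_, .loopS hq, .single (.altLoopEmpty _)⟩
            | loopSElim hq => exact ⟨_, .loopSElim hq, .single .altEmptyEmpty⟩
      · intro ℓ p' hp'
        refine ⟨_, .altBoth hp' (.empty ℓ), ?_⟩
        cases hp' with
        | loopS hq => exact .single (.altLoopEmpty _)
        | loopSElim hq => exact .single .altEmptyEmpty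
  | altEmptyEmpty =>
      constructor
      · intro ℓ p hp
        cases hp with
        | altL p1 hne => exact absurd (.empty ℓ) hne
        | altR p2 hne => exact absurd (.empty ℓ) hne
        | altBoth p1 p2 =>
            cases p1; cases p2
            exact ⟨_, .empty ℓ, .single .altEmptyEmpty⟩
      · intro ℓ p' hp'
        cases hp'
        exact ⟨_, .altBoth (.empty ℓ) (.empty ℓ), .single .altEmptyEmpty⟩
  | loopEmpty =>
      constructor
      · intro ℓ p hp
        cases hp with
        | loopS p1 => cases p1; exact ⟨_, .empty ℓ, .single .loopEmpty⟩
        | loopSElim hne => exact absurd (.empty ℓ) hne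
      · intro ℓ p' hp'
        cases hp'
        exact ⟨_, .loopS (.empty ℓ), .single .loopEmpty⟩
  | loopCongr hr ih =>
      constructor
      · intro ℓ p hp
        cases hp with
        | loopS p1 =>
            obtain ⟨q', hq', hrt⟩ := ih.1 ℓ _ p1
            exact ⟨_, .loopS hq', rt_loop hrt⟩
        | loopSElim hne =>
            exact ⟨_, .loopSElim (fun he => hne ((rw_evades hr ℓ).mpr he)), .refl⟩
      · intro ℓ p' hp'
        cases hp' with
        | loopS p1 =>
            obtain ⟨q, hq, hrt⟩ := ih.2 ℓ _ p1
            exact ⟨_, .loopS hq, rt_loop hrt⟩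
        | loopSElim hne =>
            exact ⟨_, .loopSElim (fun he => hne ((rw_evades hr ℓ).mp he)), .refl⟩
  | strictCongrL hr ih =>
      constructor
      · intro ℓ p hp
        cases hp with
        | strict p1 p2 =>
            obtain ⟨q', hq', hrt⟩ := ih.1 ℓ _ p1
            exact ⟨_, .strict hq' p2, rt_strictL hrt⟩
      · intro ℓ p' hp'
        cases hp' with
        | strict p1 p2 =>
            obtain ⟨q, hq, hrt⟩ := ih.2 ℓ _ p1
            exact ⟨_, .strict hq p2, rt_strictL hrt⟩
  | strictCongrR hr ih =>
      constructor
      · intro ℓ p hp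
        cases hp with
        | strict p1 p2 =>
            obtain ⟨q', hq', hrt⟩ := ih.1 ℓ _ p2
            exact ⟨_, .strict p1 hq', rt_strictR hrt⟩
      · intro ℓ p' hp'
        cases hp' with
        | strict p1 p2 =>
            obtain ⟨q, hq, hrt⟩ := ih.2 ℓ _ p2
            exact ⟨_, .strict p1 hq, rt_strictR hrt⟩
  | altCongrL hr ih =>
      constructor
      · intro ℓ p hp
        cases hp with
        | altL p1 hne =>
            obtain ⟨q', hq', hrt⟩ := ih.1 ℓ _ p1
            exact ⟨_, .altL hq' hne, hrt⟩
        | altR p2 hne =>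
            exact ⟨_, .altR p2 (fun he => hne ((rw_evades hr ℓ).mpr he)), .refl⟩
        | altBoth p1 p2 =>
            obtain ⟨q', hq', hrt⟩ := ih.1 ℓ _ p1
            exact ⟨_, .altBoth hq' p2, rt_altL hrt⟩
      · intro ℓ p' hp'
        cases hp' with
        | altL p1 hne =>
            obtain ⟨q, hq, hrt⟩ := ih.2 ℓ _ p1
            exact ⟨_, .altL hq hne, hrt⟩
        | altR p2 hne =>
            exact ⟨_, .altR p2 (fun he => hne ((rw_evades hr ℓ).mp he)), .refl⟩
        | altBoth p1 p2 =>
            obtain ⟨q, hq, hrt⟩ := ih.2 ℓ _ p1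
            exact ⟨_, .altBoth hq p2, rt_altL hrt⟩
  | altCongrR hr ih =>
      constructor
      · intro ℓ p hp
        cases hp with
        | altL p1 hne =>
            exact ⟨_, .altL p1 (fun he => hne ((rw_evades hr ℓ).mpr he)), .refl⟩
        | altR p2 hne =>
            obtain ⟨q', hq', hrt⟩ := ih.1 ℓ _ p2
            exact ⟨_, .altR hq' hne, hrt⟩
        | altBoth p1 p2 =>
            obtain ⟨q', hq', hrt⟩ := ih.1 ℓ _ p2
            exact ⟨_, .altBoth p1 hq', rt_altR hrt⟩
      · intro ℓ p' hp'
        cases hp' with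
        | altL p1 hne =>
            exact ⟨_, .altL p1 (fun he => hne ((rw_evades hr ℓ).mp he)), .refl⟩
        | altR p2 hne =>
            obtain ⟨q, hq, hrt⟩ := ih.2 ℓ _ p2
            exact ⟨_, .altR hq hne, hrt⟩
        | altBoth p1 p2 =>
            obtain ⟨q, hq, hrt⟩ := ih.2 ℓ _ p2
            exact ⟨_, .altBoth p1 hq, rt_altR hrt⟩
  | crCongrL hr ih =>
      constructor
      · intro ℓ p hp
        cases hp with
        | cr p1 p2 =>
            obtain ⟨q', hq', hrt⟩ := ih.1 ℓ _ p1
            exact ⟨_, .cr hq' p2, rt_crL hrt⟩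
      · intro ℓ p' hp'
        cases hp' with
        | cr p1 p2 =>
            obtain ⟨q, hq, hrt⟩ := ih.2 ℓ _ p1
            exact ⟨_, .cr hq p2, rt_crL hrt⟩
  | crCongrR hr ih =>
      constructor
      · intro ℓ p hp
        cases hp with
        | cr p1 p2 =>
            obtain ⟨q', hq', hrt⟩ := ih.1 ℓ _ p2
            exact ⟨_, .cr p1 hq', rt_crR hrt⟩
      · intro ℓ p' hp'
        cases hp' with
        | cr p1 p2 =>
            obtain ⟨q, hq, hrt⟩ := ih.2 ℓ _ p2
            exact ⟨_, .cr p1 hq, rt_crR hrt⟩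

/-- One-step rewrites are a bisimulation (up to `RT`) for execution. -/
lemma exec_sim {i i' : Interaction L M} (h : Rw i i') :
    (∀ a j, Exec i a j → ∃ j', Exec i' a j' ∧ RT j j') ∧
    (∀ a j', Exec i' a j' → ∃ j, Exec i a j ∧ RT j j') := by
  induction h with
  | strictEmptyL x =>
      constructor
      · intro a j h
        cases h with
        | strictL h1 => exact absurd h1 empty_no_exec
        | strictR h2 _ => exact ⟨_, h2, .refl⟩
      · intro a j' h
        exact ⟨_, .strictR h (.empty _), .refl⟩
  | strictEmptyR x =>
      constructor
      · intro a j h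
        cases h with
        | strictL h1 => exact ⟨_, h1, .single (.strictEmptyR _)⟩
        | strictR h2 _ => exact absurd h2 empty_no_exec
      · intro a j' h
        exact ⟨_, .strictL h, .single (.strictEmptyR _)⟩
  | crEmptyL ℓ x =>
      constructor
      · intro a j h
        cases h with
        | crL h1 => exact absurd h1 empty_no_exec
        | crR h2 hp => cases hp; exact ⟨_, h2, .single (.crEmptyL _ _)⟩
      · intro a j' h
        exact ⟨_, .crR h (.empty _), .single (.crEmptyL _ _)⟩
  | crEmptyR ℓ x =>
      constructor
      · intro a j h
        cases h with
        | crL h1 => exact ⟨_, h1, .single (.crEmptyR _ _)⟩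
        | crR h2 _ => exact absurd h2 empty_no_exec
      · intro a j' h
        exact ⟨_, .crL h, .single (.crEmptyR _ _)⟩
  | altEmptyLoop x =>
      constructor
      · intro a j h
        cases h with
        | altChoiceL h1 _ => exact absurd h1 empty_no_exec
        | altChoiceR h2 _ => exact ⟨_, h2, .refl⟩
        | altDelay h1 _ => exact absurd h1 empty_no_exec
      · intro a j' h
        exact ⟨_, .altChoiceR h (.empty a), .refl⟩
  | altLoopEmpty x =>
      constructor
      · intro a j h
        cases h with
        | altChoiceL h1 _ => exact ⟨_, h1, .refl⟩
        | altChoiceR h2 _ => exact absurd h2 empty_no_exec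
        | altDelay _ h2 => exact absurd h2 empty_no_exec
      · intro a j' h
        exact ⟨_, .altChoiceL h (.empty a), .refl⟩
  | altEmptyEmpty =>
      constructor
      · intro a j h
        cases h with
        | altChoiceL h1 _ => exact absurd h1 empty_no_exec
        | altChoiceR h2 _ => exact absurd h2 empty_no_exec
        | altDelay h1 _ => exact absurd h1 empty_no_exec
      · intro a j' h
        exact absurd h empty_no_exec
  | loopEmpty =>
      constructor
      · intro a j h
        cases h with
        | loop h1 => exact absurd h1 empty_no_exec
      · intro a j' h
        exact absurd h empty_no_exec
  | loopCongr hr ih =>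
      constructor
      · intro a j h
        cases h with
        | loop h1 =>
            obtain ⟨j1', he, hrt⟩ := ih.1 a _ h1
            exact ⟨_, .loop he,
              (rt_strictL hrt).trans (rt_strictR (.single (.loopCongr hr)))⟩
      · intro a j' h
        cases h with
        | loop h1 =>
            obtain ⟨j1, he, hrt⟩ := ih.2 a _ h1
            exact ⟨_, .loop he,
              (rt_strictL hrt).trans (rt_strictR (.single (.loopCongr hr)))⟩
  | strictCongrL hr ih =>
      constructor
      · intro a j h
        cases h with
        | strictL h1 =>
            obtain ⟨j1', he, hrt⟩ := ih.1 a _ h1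
            exact ⟨_, .strictL he, rt_strictL hrt⟩
        | strictR h2 hev =>
            exact ⟨_, .strictR h2 ((rw_evades hr _).mp hev), .refl⟩
      · intro a j' h
        cases h with
        | strictL h1 =>
            obtain ⟨j1, he, hrt⟩ := ih.2 a _ h1
            exact ⟨_, .strictL he, rt_strictL hrt⟩
        | strictR h2 hev =>
            exact ⟨_, .strictR h2 ((rw_evades hr _).mpr hev), .refl⟩
  | strictCongrR hr ih =>
      constructor
      · intro a j h
        cases h with
        | strictL h1 => exact ⟨_, .strictL h1, .single (.strictCongrR hr)⟩
        | strictR h2 hev =>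
            obtain ⟨j2', he, hrt⟩ := ih.1 a _ h2
            exact ⟨_, .strictR he hev, hrt⟩
      · intro a j' h
        cases h with
        | strictL h1 => exact ⟨_, .strictL h1, .single (.strictCongrR hr)⟩
        | strictR h2 hev =>
            obtain ⟨j2, he, hrt⟩ := ih.2 a _ h2
            exact ⟨_, .strictR he hev, hrt⟩
  | altCongrL hr ih =>
      constructor
      · intro a j h
        cases h with
        | altChoiceL h1 hne =>
            obtain ⟨j1', he, hrt⟩ := ih.1 a _ h1
            exact ⟨_, .altChoiceL he hne, hrt⟩
        | altChoiceR h2 hne =>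
            refine ⟨_, .altChoiceR h2 (noExpr_of_not_exec _ (fun j hj => ?_)), .refl⟩
            obtain ⟨jj, hjj, _⟩ := ih.2 a j hj
            exact not_exec_of_noExpr hne jj hjj
        | altDelay h1 h2 =>
            obtain ⟨j1', he, hrt⟩ := ih.1 a _ h1
            exact ⟨_, .altDelay he h2, rt_altL hrt⟩
      · intro a j' h
        cases h with
        | altChoiceL h1 hne =>
            obtain ⟨j1, he, hrt⟩ := ih.2 a _ h1
            exact ⟨_, .altChoiceL he hne, hrt⟩
        | altChoiceR h2 hne =>
            refine ⟨_, .altChoiceR h2 (noExpr_of_not_exec _ (fun j hj => ?_)), .refl⟩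
            obtain ⟨jj, hjj, _⟩ := ih.1 a j hj
            exact not_exec_of_noExpr hne jj hjj
        | altDelay h1 h2 =>
            obtain ⟨j1, he, hrt⟩ := ih.2 a _ h1
            exact ⟨_, .altDelay he h2, rt_altL hrt⟩
  | altCongrR hr ih =>
      constructor
      · intro a j h
        cases h with
        | altChoiceL h1 hne =>
            refine ⟨_, .altChoiceL h1 (noExpr_of_not_exec _ (fun j hj => ?_)), .refl⟩
            obtain ⟨jj, hjj, _⟩ := ih.2 a j hj
            exact not_exec_of_noExpr hne jj hjj
        | altChoiceR h2 hne =>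
            obtain ⟨j2', he, hrt⟩ := ih.1 a _ h2
            exact ⟨_, .altChoiceR he hne, hrt⟩
        | altDelay h1 h2 =>
            obtain ⟨j2', he, hrt⟩ := ih.1 a _ h2
            exact ⟨_, .altDelay h1 he, rt_altR hrt⟩
      · intro a j' h
        cases h with
        | altChoiceL h1 hne =>
            refine ⟨_, .altChoiceL h1 (noExpr_of_not_exec _ (fun j hj => ?_)), .refl⟩
            obtain ⟨jj, hjj, _⟩ := ih.1 a j hj
            exact not_exec_of_noExpr hne jj hjj
        | altChoiceR h2 hne =>
            obtain ⟨j2, he, hrt⟩ := ih.2 a _ h2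
            exact ⟨_, .altChoiceR he hne, hrt⟩
        | altDelay h1 h2 =>
            obtain ⟨j2, he, hrt⟩ := ih.2 a _ h2
            exact ⟨_, .altDelay h1 he, rt_altR hrt⟩
  | crCongrL hr ih =>
      constructor
      · intro a j h
        cases h with
        | crL h1 =>
            obtain ⟨j1', he, hrt⟩ := ih.1 a _ h1
            exact ⟨_, .crL he, rt_crL hrt⟩
        | crR h2 hp =>
            obtain ⟨p', hp', hrt⟩ := (prune_sim hr).1 _ _ hp
            exact ⟨_, .crR h2 hp', rt_crL hrt⟩
      · intro a j' h
        cases h with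
        | crL h1 =>
            obtain ⟨j1, he, hrt⟩ := ih.2 a _ h1
            exact ⟨_, .crL he, rt_crL hrt⟩
        | crR h2 hp =>
            obtain ⟨p, hp', hrt⟩ := (prune_sim hr).2 _ _ hp
            exact ⟨_, .crR h2 hp', rt_crL hrt⟩
  | crCongrR hr ih =>
      constructor
      · intro a j h
        cases h with
        | crL h1 => exact ⟨_, .crL h1, .single (.crCongrR hr)⟩
        | crR h2 hp =>
            obtain ⟨j2', he, hrt⟩ := ih.1 a _ h2
            exact ⟨_, .crR he hp, rt_crR hrt⟩
      · intro a j' h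
        cases h with
        | crL h1 => exact ⟨_, .crL h1, .single (.crCongrR hr)⟩
        | crR h2 hp =>
            obtain ⟨j2, he, hrt⟩ := ih.2 a _ h2
            exact ⟨_, .crR he hp, rt_crR hrt⟩

lemma exec_sim_rt_fwd {i i' : Interaction L M} (h : RT i i') :
    ∀ a j, Exec i a j → ∃ j', Exec i' a j' ∧ RT j j' := by
  induction h with
  | refl => exact fun a j hj => ⟨j, hj, .refl⟩
  | tail _ hr ih =>
      intro a j hj
      obtain ⟨j1, he1, hrt1⟩ := ih a j hj
      obtain ⟨j2, he2, hrt2⟩ := (exec_sim hr).1 a j1 he1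
      exact ⟨j2, he2, hrt1.trans hrt2⟩

lemma exec_sim_rt_bwd {i i' : Interaction L M} (h : RT i i') :
    ∀ a j', Exec i' a j' → ∃ j, Exec i a j ∧ RT j j' := by
  induction h with
  | refl => exact fun a j hj => ⟨j, hj, .refl⟩
  | tail _ hr ih =>
      intro a j' hj'
      obtain ⟨j1, he1, hrt1⟩ := (exec_sim hr).2 a j' hj'
      obtain ⟨j2, he2, hrt2⟩ := ih a j1 he1
      exact ⟨j2, he2, hrt2.trans hrt1⟩

lemma sem_iff_of_rt : ∀ (t : List (MyAction L M)) {i i' : Interaction L M},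
    RT i i' → (Sem i t ↔ Sem i' t) := by
  intro t
  induction t with
  | nil =>
      intro i i' h
      constructor
      · intro hs
        cases hs with
        | nil he => exact .nil ((rt_evades h _).mp he)
      · intro hs
        cases hs with
        | nil he => exact .nil ((rt_evades h _).mpr he)
  | cons a t ih =>
      intro i i' h
      constructor
      · intro hs
        cases hs with
        | cons he hsem =>
            obtain ⟨j', he', hrt⟩ := exec_sim_rt_fwd h _ _ he
            exact .cons he' ((ih hrt).mp hsem)
      · intro hs
        cases hs with
        | cons he hsem =>
            obtain ⟨j, he', hrt⟩ := exec_sim_rt_bwd h _ _ he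
            exact .cons he' ((ih hrt).mpr hsem)

end Aux

/-- every one-step rewrite of the simplification system preserves the
trace semantics: if `i →_R i'` then `σ(i) = σ(i')`. -/
theorem rw_preserves_sem {L M : Type} [Finite L] [Finite M] (i i' : Interaction L M)
    (h : Rw i i') :
    {t | Sem i t} = {t | Sem i' t} := by
  ext t
  exact sem_iff_of_rt t (Relation.ReflTransGen.single h)
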